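/- Differentiable trivialisations make the infinitesimal of a deformation a Hochschild coboundary: let A be a finite-dimensional real associative algebra with product (a,b) ↦ a·b, and let f_i : A × A → A (i ≥ 0) be bilinear maps with f_0(a,b) = a·b. Let U ⊆ ℝ be a neighbourhood of 0 and suppose that for each λ ∈ U there is a bilinear product ∗_λ on A such that for all a, b ∈ A the series Σ_{i=0}^∞ f_i(a,b) λ^i converges to a ∗_λ b. Suppose φ_λ : A → A (λ ∈ U) are linear bijections such that φ_λ(a ∗_λ b) = φ_λ(a)·φ_λ(b) for all a, b ∈ A (so φ_λ is an algebra isomorphism from (A, ∗_λ) to (A, ·)), φ_0 is the identity, and for each a ∈ A the map λ ↦ φ_λ(a) is differentiable at λ = 0; let g(a) denote its derivative at 0. Then f_1(a,b) = a·g(b) − g(a·b) + g(a)·b for all a, b ∈ A; that is, f_1 is the Hochschild coboundary ∂_1 g. -/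

import Mathlib

open Filter Asymptotics

lemma aux_sum_bound {A : Type*} [NormedAddCommGroup A] [NormedSpace ℝ A]
    (v : ℕ → A) (l0 C lam : ℝ) (hl0 : 0 < l0) (hC : 0 ≤ C)
    (hv : ∀ i, ‖v i‖ ≤ C / l0 ^ i) (hlam : |lam| ≤ l0 / 2)
    {N : ℕ} (hN : 2 ≤ N) :
    ‖(∑ i ∈ Finset.range N, lam ^ i • v i) - v 0 - lam • v 1‖
      ≤ 2 * C / l0 ^ 2 * lam ^ 2 := by
  have hl0' : l0 ≠ 0 := ne_of_gt hl0
  set q : ℝ := |lam| / l0 with hq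
  have hq0 : 0 ≤ q := by positivity
  have hq2 : q ≤ 1 / 2 := by
    rw [hq, div_le_div_iff₀ hl0 (by norm_num)]
    linarith
  have hsplit : ∑ i ∈ Finset.range N, lam ^ i • v i
      = (v 0 + lam • v 1) + ∑ i ∈ Finset.Ico 2 N, lam ^ i • v i := by
    rw [Finset.range_eq_Ico, ← Finset.sum_Ico_consecutive _ (by norm_num : (0:ℕ) ≤ 2) hN]
    congr 1
    rw [← Finset.range_eq_Ico]
    simp [Finset.sum_range_succ]
  rw [hsplit]
  have h1 : (v 0 + lam • v 1) + (∑ i ∈ Finset.Ico 2 N, lam ^ i • v i) - v 0 - lam • v 1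
      = ∑ i ∈ Finset.Ico 2 N, lam ^ i • v i := by abel
  rw [h1]
  have hgeom : ∑ j ∈ Finset.range (N - 2), q ^ j ≤ 2 := by
    have h := geom_sum_mul q (N - 2)
    have hqN : 0 ≤ q ^ (N - 2) := by positivity
    nlinarith [Finset.sum_nonneg (fun j (_ : j ∈ Finset.range (N-2)) => pow_nonneg hq0 j)]
  have hsum0 : (0:ℝ) ≤ ∑ j ∈ Finset.range (N - 2), q ^ j :=
    Finset.sum_nonneg (fun j _ => pow_nonneg hq0 j)
  have hqsq : q ^ 2 = lam ^ 2 / l0 ^ 2 := by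
    rw [hq, div_pow, sq_abs]
  calc ‖∑ i ∈ Finset.Ico 2 N, lam ^ i • v i‖
      ≤ ∑ i ∈ Finset.Ico 2 N, ‖lam ^ i • v i‖ := norm_sum_le _ _
    _ ≤ ∑ i ∈ Finset.Ico 2 N, C * q ^ i := by
        apply Finset.sum_le_sum
        intro i _
        rw [norm_smul, norm_pow, Real.norm_eq_abs]
        calc |lam| ^ i * ‖v i‖ ≤ |lam| ^ i * (C / l0 ^ i) :=
              mul_le_mul_of_nonneg_left (hv i) (by positivity)
          _ = C * q ^ i := by rw [hq, div_pow]; ring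
    _ = C * (q ^ 2 * ∑ j ∈ Finset.range (N - 2), q ^ j) := by
        rw [Finset.sum_Ico_eq_sum_range, Finset.mul_sum, Finset.mul_sum]
        exact Finset.sum_congr rfl fun j _ => by ring
    _ ≤ C * (q ^ 2 * 2) :=
        mul_le_mul_of_nonneg_left
          (mul_le_mul_of_nonneg_left hgeom (sq_nonneg q)) hC
    _ = 2 * C / l0 ^ 2 * lam ^ 2 := by rw [hqsq]; field_simp

lemma aux_hasDerivAt {A : Type*} [NormedAddCommGroup A] [NormedSpace ℝ A]
    (v : ℕ → A) (s : ℝ → A) (l0 C : ℝ) (hl0 : 0 < l0) (hC : 0 ≤ C)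
    (hv : ∀ i, ‖v i‖ ≤ C / l0 ^ i)
    (hconv : ∀ lam : ℝ, |lam| ≤ l0 / 2 →
      Tendsto (fun N => ∑ i ∈ Finset.range N, lam ^ i • v i) atTop (nhds (s lam)))
    (hs0 : s 0 = v 0) :
    HasDerivAt s (v 1) 0 := by
  set K : ℝ := 2 * C / l0 ^ 2 with hK
  have hK0 : 0 ≤ K := by positivity
  have key : ∀ lam : ℝ, |lam| ≤ l0 / 2 → ‖s lam - v 0 - lam • v 1‖ ≤ K * lam ^ 2 := by
    intro lam hlam
    have hT : Tendsto (fun N => (∑ i ∈ Finset.range N, lam ^ i • v i) - v 0 - lam • v 1)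
        atTop (nhds (s lam - v 0 - lam • v 1)) :=
      ((hconv lam hlam).sub_const _).sub_const _
    refine le_of_tendsto hT.norm ?_
    filter_upwards [eventually_ge_atTop 2] with N hN
    exact aux_sum_bound v l0 C lam hl0 hC hv hlam hN
  rw [hasDerivAt_iff_isLittleO]
  simp only [sub_zero, hs0]
  rw [isLittleO_iff]
  intro c hc
  have hδpos : 0 < min (l0 / 2) (c / (K + 1)) := by positivity
  filter_upwards [Metric.ball_mem_nhds (0:ℝ) hδpos] with x hx
  rw [Metric.mem_ball, Real.dist_eq, sub_zero] at hx
  have hx1 : |x| ≤ l0 / 2 := le_of_lt (lt_of_lt_of_le hx (min_le_left _ _))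
  have hx2 : |x| ≤ c / (K + 1) := le_of_lt (lt_of_lt_of_le hx (min_le_right _ _))
  have h := key x hx1
  rw [Real.norm_eq_abs]
  have hxabs : x ^ 2 = |x| * |x| := by rw [← sq_abs]; ring
  have hK1 : (0:ℝ) < K + 1 := by linarith
  have h2 : K * (|x| * |x|) ≤ c * |x| := by
    have h3 : K * |x| ≤ K * (c / (K + 1)) :=
      mul_le_mul_of_nonneg_left hx2 hK0
    have h4 : K * (c / (K + 1)) ≤ c := by
      rw [mul_div_assoc', div_le_iff₀ hK1]
      nlinarith
    nlinarith [abs_nonneg x]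
  calc ‖s x - v 0 - x • v 1‖ ≤ K * x ^ 2 := h
    _ = K * (|x| * |x|) := by rw [hxabs]
    _ ≤ c * |x| := h2




/-- Differentiable trivialisations make the infinitesimal of a one-parameter
deformation of a finite-dimensional real associative algebra a Hochschild
coboundary.  The algebra is `A` with associative bilinear product `mul`; the
deformation is the family of bilinear maps `f i` with `f 0 = mul`, whose power
series in `lam` converges on a neighbourhood `U` of `0` to the product
`st lam`; `φ lam` is a linear bijection which is an algebra isomorphism from
`(A, st lam)` to `(A, mul)`, with `φ 0 = id` and `lam ↦ φ lam a` differentiable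
at `0` with derivative `g a`.  Then `f 1 = ∂₁ g`. -/
theorem deformation_infinitesimal_is_coboundary
    (A : Type*) [NormedAddCommGroup A] [NormedSpace ℝ A] [FiniteDimensional ℝ A]
    (mul : A →ₗ[ℝ] A →ₗ[ℝ] A)
    (hassoc : ∀ a b c : A, mul (mul a b) c = mul a (mul b c))
    (f : ℕ → A →ₗ[ℝ] A →ₗ[ℝ] A) (hf0 : f 0 = mul)
    (U : Set ℝ) (hU : U ∈ nhds (0 : ℝ))
    (st : ℝ → A → A → A)
    (hconv : ∀ lam ∈ U, ∀ a b : A,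
      Filter.Tendsto (fun N => ∑ i ∈ Finset.range N, lam ^ i • f i a b)
        Filter.atTop (nhds (st lam a b)))
    (φ : ℝ → A →ₗ[ℝ] A)
    (hbij : ∀ lam ∈ U, Function.Bijective (φ lam))
    (hhom : ∀ lam ∈ U, ∀ a b : A, φ lam (st lam a b) = mul (φ lam a) (φ lam b))
    (hφ0 : φ 0 = LinearMap.id)
    (g : A → A)
    (hg : ∀ a : A, HasDerivAt (fun lam => φ lam a) (g a) 0) :
    ∀ a b : A, f 1 a b = mul a (g b) - g (mul a b) + mul (g a) b := by
  intro a b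
  have h0U : (0:ℝ) ∈ U := mem_of_mem_nhds hU
  obtain ⟨r, hr0, hball⟩ := Metric.mem_nhds_iff.mp hU
  set v : ℕ → A := fun i => f i a b with hv
  set s : ℝ → A := fun lam => st lam a b with hs
  -- s 0 = v 0
  have hs0 : s 0 = v 0 := by
    have h1 : Filter.Tendsto (fun N => ∑ i ∈ Finset.range N, (0:ℝ) ^ i • v i)
        Filter.atTop (nhds (s 0)) := hconv 0 h0U a b
    have h3 : Filter.Tendsto (fun N => ∑ i ∈ Finset.range N, (0:ℝ) ^ i • v i)
        Filter.atTop (nhds (v 0)) := by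
      apply Filter.Tendsto.congr' _ tendsto_const_nhds
      filter_upwards [Filter.eventually_ge_atTop 1] with N hN
      rw [Finset.sum_eq_single_of_mem 0 (Finset.mem_range.mpr hN)]
      · simp
      · intro i _ hi; simp [zero_pow hi]
    exact tendsto_nhds_unique h1 h3
  -- coefficient bound at l0 = r/4  (so that |lam| ≤ l0/2 implies lam ∈ ball 0 r)
  have hl0pos : 0 < r / 4 := by linarith
  have hmem : ∀ lam : ℝ, |lam| ≤ r / 4 → lam ∈ U := by
    intro lam hlam
    apply hball
    rw [Metric.mem_ball, Real.dist_eq, sub_zero]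
    linarith
  have hl0U : (r/4 : ℝ) ∈ U := hmem _ (by rw [abs_of_pos hl0pos])
  have hterm : Filter.Tendsto (fun N => (r/4) ^ N • v N) Filter.atTop (nhds 0) := by
    have T := hconv (r/4) hl0U a b
    have T2 := (T.comp (Filter.tendsto_add_atTop_nat 1)).sub T
    simp only [sub_self] at T2
    refine T2.congr fun N => ?_
    simp [Finset.sum_range_succ]; rfl
  obtain ⟨C, hC⟩ := hterm.norm.bddAbove_range
  have hCmem : ∀ N, ‖(r/4) ^ N • v N‖ ≤ C := fun N => hC ⟨N, rfl⟩
  have hC0 : 0 ≤ C := le_trans (norm_nonneg _) (hCmem 0)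
  have hvN : ∀ N, ‖v N‖ ≤ C / (r/4) ^ N := by
    intro N
    rw [le_div_iff₀ (by positivity)]
    have := hCmem N
    rwa [norm_smul, norm_pow, Real.norm_eq_abs, abs_of_pos hl0pos, mul_comm] at this
  -- derivative of s at 0
  have hsd : HasDerivAt s (v 1) 0 := by
    refine aux_hasDerivAt v s (r/4) C hl0pos hC0 hvN (fun lam hlam => ?_) hs0
    exact hconv lam (hmem lam (by linarith)) a b
  -- g is linear
  have hgadd : ∀ x y : A, g (x + y) = g x + g y := by
    intro x y
    have h1 : HasDerivAt (fun lam => φ lam (x + y)) (g x + g y) 0 := by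
      have := (hg x).add (hg y)
      simpa [map_add, Pi.add_def] using this
    exact (hg (x + y)).unique h1
  have hgsmul : ∀ (c : ℝ) (x : A), g (c • x) = c • g x := by
    intro c x
    have h1 : HasDerivAt (fun lam => φ lam (c • x)) (c • g x) 0 := by
      have := (hg x).const_smul c
      simpa [map_smul, Pi.smul_def] using this
    exact (hg (c • x)).unique h1
  let glin : A →ₗ[ℝ] A :=
    { toFun := g, map_add' := hgadd, map_smul' := hgsmul }
  have hglin : ∀ x, glin x = g x := fun _ => rfl
  -- basis
  let bA : Module.Basis (Fin (Module.finrank ℝ A)) ℝ A := Module.finBasis ℝ A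
  -- derivative of lam ↦ φ lam (s lam)
  have hF : HasDerivAt (fun lam => φ lam (s lam)) (g (v 0) + v 1) 0 := by
    have heq : ∀ lam, φ lam (s lam) = ∑ i, (bA.repr (s lam) i) • φ lam (bA i) := by
      intro lam
      conv_lhs => rw [← bA.sum_repr (s lam)]
      rw [map_sum]
      simp [map_smul]
    have hcoord : ∀ i, HasDerivAt (fun lam => bA.repr (s lam) i) (bA.repr (v 1) i) 0 := by
      intro i
      have hL := (LinearMap.toContinuousLinearMap (bA.coord i)).hasFDerivAt (x := s 0)
      have := hL.comp_hasDerivAt 0 hsd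
      simpa [Function.comp_def, Module.Basis.coord_apply] using this
    have hsum : HasDerivAt (fun lam => ∑ i, (bA.repr (s lam) i) • φ lam (bA i))
        (∑ i, ((bA.repr (s 0) i) • g (bA i) + (bA.repr (v 1) i) • φ 0 (bA i))) 0 := by
      apply HasDerivAt.fun_sum
      intro i _
      exact (hcoord i).smul (hg (bA i))
    have hsum' : (∑ i, ((bA.repr (s 0) i) • g (bA i) + (bA.repr (v 1) i) • φ 0 (bA i)))
        = g (v 0) + v 1 := by
      rw [Finset.sum_add_distrib]
      congr 1
      · rw [hs0]
        calc ∑ i, (bA.repr (v 0) i) • g (bA i)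
            = ∑ i, glin ((bA.repr (v 0) i) • bA i) := by
              exact Finset.sum_congr rfl fun i _ => by rw [map_smul, hglin]
          _ = glin (∑ i, (bA.repr (v 0) i) • bA i) := (map_sum glin _ _).symm
          _ = g (v 0) := by rw [bA.sum_repr, hglin]
      · simp only [hφ0, LinearMap.id_apply]
        exact bA.sum_repr (v 1)
    rw [← hsum'] 
    exact hsum.congr_deriv rfl |>.congr_of_eventuallyEq (by
      filter_upwards with lam using (heq lam))
  -- continuous bilinear version of mul
  let m1 : A →ₗ[ℝ] (A →L[ℝ] A) :=
    { toFun := fun x => LinearMap.toContinuousLinearMap (mul x)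
      map_add' := by intro x y; ext z; simp
      map_smul' := by intro c x; ext z; simp }
  let M : A →L[ℝ] (A →L[ℝ] A) := LinearMap.toContinuousLinearMap m1
  have hMapp : ∀ x y : A, M x y = mul x y := fun x y => rfl
  have hGa : HasDerivAt (fun lam => M (φ lam a)) (M (g a)) 0 := by
    have := M.hasFDerivAt.comp_hasDerivAt 0 (hg a)
    simpa [Function.comp_def] using this
  have hG : HasDerivAt (fun lam => M (φ lam a) (φ lam b))
      (M (g a) (φ 0 b) + M (φ 0 a) (g b)) 0 := hGa.clm_apply (hg b)
  -- the two functions agree near 0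
  have hFG : (fun lam => φ lam (s lam)) =ᶠ[nhds 0] (fun lam => M (φ lam a) (φ lam b)) := by
    filter_upwards [hU] with lam hlam
    rw [hMapp]
    exact hhom lam hlam a b
  have hF' : HasDerivAt (fun lam => M (φ lam a) (φ lam b)) (g (v 0) + v 1) 0 :=
    hF.congr_of_eventuallyEq hFG.symm
  have hkey : g (v 0) + v 1 = mul (g a) b + mul a (g b) := by
    have := hF'.unique hG
    rw [this, hMapp, hMapp, hφ0]
    simp
  have hv0 : v 0 = mul a b := by rw [hv]; simp [hf0]
  have hfinal : v 1 = mul (g a) b + mul a (g b) - g (mul a b) := by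
    rw [eq_sub_iff_add_eq, add_comm, ← hv0]
    exact hkey
  show v 1 = mul a (g b) - g (mul a b) + mul (g a) b
  rw [hfinal]; abel
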